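/- arXiv:2404.11024 — 2 statements merged into one kernel-verified Lean document; each statement's English description precedes it below -/
import Mathlib

section
/- Let L be a symmetric positive definite m×m real matrix with marginal kernel K := L(L + I)^{-1}, and let Y ∼ P_L. Then for every a ∈ {1,…,m} the variance of the indicator 1_{a∈Y} under P_L equals K_{aa}(1 − K_{aa}), and for every pair a ≠ b in {1,…,m} the covariance of 1_{a∈Y} and 1_{b∈Y} under P_L equals −(K_{ab})². -/
/-- The determinant of the principal submatrix of `M` with rows and columns in `A`
(equal to `1` when `A = ∅`). -/
noncomputable def pminor {m : ℕ} (M : Matrix (Fin m) (Fin m) ℝ) (A : Finset (Fin m)) : ℝ :=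
  (M.submatrix (fun i : A => (i : Fin m)) (fun j : A => (j : Fin m))).det

/-- The `L`-ensemble determinantal point process. -/
noncomputable def dppP {m : ℕ} (L : Matrix (Fin m) (Fin m) ℝ) (A : Finset (Fin m)) : ℝ :=
  pminor L A / (L + 1).det

lemma det_piecewise_one {m : ℕ} (M : Matrix (Fin m) (Fin m) ℝ) (s : Finset (Fin m)) :
    Matrix.det (s.piecewise M (1 : Matrix (Fin m) (Fin m) ℝ) : Matrix (Fin m) (Fin m) ℝ)
      = pminor M s := by
  classical
  refine (Matrix.det_submatrix_equiv_self (Equiv.sumCompl (· ∈ s)) _).symm.trans ?_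
  have h : Matrix.submatrix (s.piecewise M (1 : Matrix (Fin m) (Fin m) ℝ))
      (Equiv.sumCompl (· ∈ s)) (Equiv.sumCompl (· ∈ s)) =
      Matrix.fromBlocks
        (M.submatrix (fun i : s => (i : Fin m)) (fun j : s => (j : Fin m)))
        (M.submatrix (fun i : s => (i : Fin m)) (fun j : {x // ¬ x ∈ s} => (j : Fin m)))
        0 1 := by
    ext i j
    erw [Matrix.submatrix_apply]
    cases i with
    | inl i =>
      cases j with
      | inl j => simp [Finset.piecewise, i.2]
      | inr j => simp [Finset.piecewise, i.2]
    | inr i =>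
      cases j with
      | inl j =>
        have : (i : Fin m) ≠ (j : Fin m) := fun h => i.2 (h ▸ j.2)
        simp [Finset.piecewise, i.2, Matrix.one_apply, this]
      | inr j =>
        simp [Finset.piecewise, i.2, Matrix.one_apply, Subtype.ext_iff]
        congr
  rw [h, Matrix.det_fromBlocks_zero₂₁]
  simp [pminor]

lemma det_add_diagonal {m : ℕ} (M : Matrix (Fin m) (Fin m) ℝ) (d : Fin m → ℝ) :
    (M + Matrix.diagonal d).det = ∑ s : Finset (Fin m), (∏ i ∈ sᶜ, d i) * pminor M s := by
  classical
  have h0 : (M + Matrix.diagonal d).det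
      = (Matrix.detRowAlternating (n := Fin m) (R := ℝ)).toMultilinearMap
          (M + Matrix.diagonal d) := rfl
  refine h0.trans ((MultilinearMap.map_add_univ _ _ _).trans ?_)
  refine Finset.sum_congr rfl fun s _ => ?_
  have hps : s.piecewise M (Matrix.diagonal d)
      = sᶜ.piecewise (fun i => d i • (s.piecewise M (1 : Matrix (Fin m) (Fin m) ℝ)) i)
          (s.piecewise M (1 : Matrix (Fin m) (Fin m) ℝ)) := by
    funext i j
    by_cases hi : i ∈ s
    · simp [Finset.piecewise, hi]
    · simp only [Finset.piecewise, hi, Finset.mem_compl, if_neg, if_pos, if_true,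
        not_false_iff]
      simp only [Matrix.diagonal, Matrix.one_apply, Pi.smul_apply, smul_eq_mul,
        Matrix.of_apply]
      split_ifs <;> ring
  rw [hps, MultilinearMap.map_piecewise_smul]
  have : (Matrix.detRowAlternating (n := Fin m) (R := ℝ)).toMultilinearMap
      (s.piecewise M (1 : Matrix (Fin m) (Fin m) ℝ))
      = pminor M s := det_piecewise_one M s
  rw [this, smul_eq_mul]

lemma sum_pminor_indicator {m : ℕ} (L : Matrix (Fin m) (Fin m) ℝ) (S : Finset (Fin m)) :
    ∑ A : Finset (Fin m), pminor L A * (if S ⊆ A then 1 else 0)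
      = (L + Matrix.diagonal (fun i => if i ∈ S then (0 : ℝ) else 1)).det := by
  classical
  rw [det_add_diagonal]
  refine Finset.sum_congr rfl fun A _ => ?_
  have hprod : (∏ i ∈ Aᶜ, (if i ∈ S then (0 : ℝ) else 1)) = if S ⊆ A then 1 else 0 := by
    by_cases h : S ⊆ A
    · rw [if_pos h]
      refine Finset.prod_eq_one fun i hi => ?_
      rw [if_neg fun hiS => (Finset.mem_compl.mp hi) (h hiS)]
    · rw [if_neg h]
      obtain ⟨i, hiS, hiA⟩ := Finset.not_subset.mp h
      exact Finset.prod_eq_zero (Finset.mem_compl.mpr hiA) (if_pos hiS)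
  rw [hprod, mul_comm]

lemma det_one_sub_CU {m k : ℕ} (C : Matrix (Fin m) (Fin m) ℝ)
    (U : Matrix (Fin m) (Fin k) ℝ) :
    (1 - C * (U * U.transpose)).det = (1 - U.transpose * (C * U)).det := by
  rw [← Matrix.mul_assoc, Matrix.det_one_sub_mul_comm]


lemma diag_single {m : ℕ} (a : Fin m) :
    Matrix.diagonal (fun i => if i ∈ ({a} : Finset (Fin m)) then (0 : ℝ) else 1)
      = 1 - (Matrix.replicateCol (Fin 1) (Pi.single a (1 : ℝ))) *
          (Matrix.replicateCol (Fin 1) (Pi.single a (1 : ℝ))).transpose := by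
  funext i j
  have hm : ((Matrix.replicateCol (Fin 1) (Pi.single a (1 : ℝ))) *
      (Matrix.replicateCol (Fin 1) (Pi.single a (1 : ℝ))).transpose) i j
      = (if i = a then (1 : ℝ) else 0) * (if j = a then 1 else 0) := by
    simp [Matrix.mul_apply, Pi.single_apply]
  simp only [Matrix.diagonal, Matrix.sub_apply, Matrix.one_apply, Matrix.of_apply,
    Finset.mem_singleton, hm]
  split_ifs <;> simp_all

lemma diag_pair {m : ℕ} (a b : Fin m) (hab : a ≠ b) :
    Matrix.diagonal (fun i => if i ∈ ({a, b} : Finset (Fin m)) then (0 : ℝ) else 1)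
      = 1 - (Matrix.of fun i k =>
            (![Pi.single a 1, Pi.single b 1] : Fin 2 → Fin m → ℝ) k i) *
          (Matrix.of fun i k =>
            (![Pi.single a 1, Pi.single b 1] : Fin 2 → Fin m → ℝ) k i).transpose := by
  funext i j
  have hm : ((Matrix.of fun i k =>
        (![Pi.single a 1, Pi.single b 1] : Fin 2 → Fin m → ℝ) k i) *
      (Matrix.of fun i k =>
        (![Pi.single a 1, Pi.single b 1] : Fin 2 → Fin m → ℝ) k i).transpose) i j
      = (if i = a then (1 : ℝ) else 0) * (if j = a then 1 else 0)
        + (if i = b then (1 : ℝ) else 0) * (if j = b then 1 else 0) := by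
    simp [Matrix.mul_apply, Fin.sum_univ_two, Pi.single_apply]
  simp only [Matrix.diagonal, Matrix.sub_apply, Matrix.one_apply, Matrix.of_apply,
    Finset.mem_insert, Finset.mem_singleton, hm]
  split_ifs <;> simp_all

theorem dpp_variance_covariance_singletons (m : ℕ) (L : Matrix (Fin m) (Fin m) ℝ)
    (hsymm : L.IsSymm) (hL : L.PosDef)
    (K : Matrix (Fin m) (Fin m) ℝ) (hK : K = L * (L + 1)⁻¹) :
    (∀ a : Fin m,
      (∑ A : Finset (Fin m), dppP L A * (if a ∈ A then 1 else 0) * (if a ∈ A then 1 else 0))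
        - (∑ A : Finset (Fin m), dppP L A * (if a ∈ A then 1 else 0)) *
          (∑ A : Finset (Fin m), dppP L A * (if a ∈ A then 1 else 0))
        = K a a * (1 - K a a)) ∧
    (∀ a b : Fin m, a ≠ b →
      (∑ A : Finset (Fin m), dppP L A * (if a ∈ A then 1 else 0) * (if b ∈ A then 1 else 0))
        - (∑ A : Finset (Fin m), dppP L A * (if a ∈ A then 1 else 0)) *
          (∑ A : Finset (Fin m), dppP L A * (if b ∈ A then 1 else 0))
        = -(K a b) ^ 2) := by
  classical
  have hpd : (L + 1).PosDef := hL.add Matrix.PosDef.one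
  have hdet : (0 : ℝ) < (L + 1).det := hpd.det_pos
  have hdu : IsUnit (L + 1).det := isUnit_iff_ne_zero.mpr hdet.ne'
  obtain ⟨C, hCeq⟩ : ∃ C', (L + 1)⁻¹ = C' := ⟨_, rfl⟩
  have hCl : (L + 1) * C = 1 := hCeq ▸ Matrix.mul_nonsing_inv _ hdu
  have hKC : K = 1 - C := by
    rw [hK, hCeq, ← hCl, Matrix.add_mul, Matrix.one_mul, add_sub_cancel_right]
  have hCsymm : C.transpose = C := by
    rw [← hCeq, Matrix.transpose_nonsing_inv]
    congr 1
    rw [Matrix.transpose_add, hsymm.eq, Matrix.transpose_one]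
  clear hCeq hK
  have hCba : ∀ a b : Fin m, C b a = C a b := by
    intro a b
    conv_lhs => rw [← hCsymm]
    rfl
  -- single marginal
  have hmarg1 : ∀ a : Fin m,
      (∑ A : Finset (Fin m), dppP L A * (if a ∈ A then 1 else 0)) = 1 - C a a := by
    intro a
    have hsum : (∑ A : Finset (Fin m), dppP L A * (if a ∈ A then 1 else 0))
        = (∑ A : Finset (Fin m), pminor L A * (if ({a} : Finset (Fin m)) ⊆ A then 1 else 0))
            / (L + 1).det := by
      rw [Finset.sum_div]
      refine Finset.sum_congr rfl fun A _ => ?_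
      simp only [dppP, Finset.singleton_subset_iff, div_mul_eq_mul_div]
    rw [hsum, sum_pminor_indicator]
    -- compute the determinant
    set U : Matrix (Fin m) (Fin 1) ℝ := Matrix.replicateCol (Fin 1) (Pi.single a (1 : ℝ)) with hU
    have hD : Matrix.diagonal (fun i => if i ∈ ({a} : Finset (Fin m)) then (0 : ℝ) else 1)
        = 1 - U * U.transpose := diag_single a
    have hfact : L + Matrix.diagonal
        (fun i => if i ∈ ({a} : Finset (Fin m)) then (0 : ℝ) else 1)
        = (L + 1) * (1 - C * (U * U.transpose)) := by
      rw [Matrix.mul_sub, Matrix.mul_one, ← Matrix.mul_assoc, hCl, Matrix.one_mul, hD,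
        ← add_sub_assoc]
    rw [hfact, Matrix.det_mul, det_one_sub_CU]
    have hentry : (1 - U.transpose * (C * U)) = Matrix.of fun _ _ : Fin 1 => 1 - C a a := by
      funext k l
      fin_cases k <;> fin_cases l <;>
        simp [hU, Matrix.mul_apply, Matrix.sub_apply, Matrix.one_apply,
          Pi.single_apply, Finset.mul_sum, ite_mul, mul_ite, Finset.sum_ite_eq,
          Finset.sum_ite_eq']
    rw [hentry]
    rw [Matrix.det_fin_one]
    rw [Matrix.of_apply]
    field_simp
  -- pair marginal
  have hmarg2 : ∀ a b : Fin m, a ≠ b →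
      (∑ A : Finset (Fin m), dppP L A * (if a ∈ A then 1 else 0) * (if b ∈ A then 1 else 0))
        = (1 - C a a) * (1 - C b b) - C a b * C b a := by
    intro a b hab
    have hsum : (∑ A : Finset (Fin m), dppP L A * (if a ∈ A then 1 else 0) *
          (if b ∈ A then 1 else 0))
        = (∑ A : Finset (Fin m), pminor L A *
            (if ({a, b} : Finset (Fin m)) ⊆ A then 1 else 0)) / (L + 1).det := by
      rw [Finset.sum_div]
      refine Finset.sum_congr rfl fun A _ => ?_
      have hind : (if a ∈ A then (1:ℝ) else 0) * (if b ∈ A then 1 else 0)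
          = (if ({a, b} : Finset (Fin m)) ⊆ A then 1 else 0) := by
        simp only [Finset.insert_subset_iff, Finset.singleton_subset_iff]
        by_cases ha : a ∈ A <;> by_cases hb : b ∈ A <;> simp [ha, hb]
      rw [mul_assoc, hind]
      simp only [dppP, div_mul_eq_mul_div]
    rw [hsum, sum_pminor_indicator]
    set U : Matrix (Fin m) (Fin 2) ℝ :=
      Matrix.of fun i k => (![Pi.single a 1, Pi.single b 1] : Fin 2 → Fin m → ℝ) k i with hU
    have hD : Matrix.diagonal (fun i => if i ∈ ({a, b} : Finset (Fin m)) then (0 : ℝ) else 1)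
        = 1 - U * U.transpose := diag_pair a b hab
    have hfact : L + Matrix.diagonal
        (fun i => if i ∈ ({a, b} : Finset (Fin m)) then (0 : ℝ) else 1)
        = (L + 1) * (1 - C * (U * U.transpose)) := by
      rw [Matrix.mul_sub, Matrix.mul_one, ← Matrix.mul_assoc, hCl, Matrix.one_mul, hD,
        ← add_sub_assoc]
    rw [hfact, Matrix.det_mul, det_one_sub_CU]
    have h00 : ((1 - U.transpose * (C * U)) : Matrix (Fin 2) (Fin 2) ℝ) 0 0 = 1 - C a a := by
      simp [hU, Matrix.mul_apply, Matrix.sub_apply, Matrix.one_apply, Pi.single_apply,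
        Finset.mul_sum, ite_mul, mul_ite, Finset.sum_ite_eq, Finset.sum_ite_eq', hab,
        Ne.symm hab]
    have h01 : ((1 - U.transpose * (C * U)) : Matrix (Fin 2) (Fin 2) ℝ) 0 1 = -(C a b) := by
      simp [hU, Matrix.mul_apply, Matrix.sub_apply, Matrix.one_apply, Pi.single_apply,
        Finset.mul_sum, ite_mul, mul_ite, Finset.sum_ite_eq, Finset.sum_ite_eq', hab,
        Ne.symm hab]
    have h10 : ((1 - U.transpose * (C * U)) : Matrix (Fin 2) (Fin 2) ℝ) 1 0 = -(C b a) := by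
      simp [hU, Matrix.mul_apply, Matrix.sub_apply, Matrix.one_apply, Pi.single_apply,
        Finset.mul_sum, ite_mul, mul_ite, Finset.sum_ite_eq, Finset.sum_ite_eq', hab,
        Ne.symm hab]
    have h11 : ((1 - U.transpose * (C * U)) : Matrix (Fin 2) (Fin 2) ℝ) 1 1 = 1 - C b b := by
      simp [hU, Matrix.mul_apply, Matrix.sub_apply, Matrix.one_apply, Pi.single_apply,
        Finset.mul_sum, ite_mul, mul_ite, Finset.sum_ite_eq, Finset.sum_ite_eq', hab,
        Ne.symm hab]
    rw [Matrix.det_fin_two, h00, h01, h10, h11]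
    field_simp
  constructor
  · intro a
    have hsq : (∑ A : Finset (Fin m), dppP L A * (if a ∈ A then 1 else 0) *
          (if a ∈ A then 1 else 0))
        = ∑ A : Finset (Fin m), dppP L A * (if a ∈ A then 1 else 0) := by
      refine Finset.sum_congr rfl fun A _ => ?_
      split_ifs <;> ring
    rw [hsq, hmarg1 a]
    have hKaa : K a a = 1 - C a a := by
      rw [hKC]; simp [Matrix.sub_apply, Matrix.one_apply]
    rw [hKaa]; ring
  · intro a b hab
    rw [hmarg2 a b hab, hmarg1 a, hmarg1 b]
    have hKaa : K a a = 1 - C a a := by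
      rw [hKC]; simp [Matrix.sub_apply, Matrix.one_apply]
    have hKbb : K b b = 1 - C b b := by
      rw [hKC]; simp [Matrix.sub_apply, Matrix.one_apply]
    have hKab : K a b = -(C a b) := by
      rw [hKC]; simp [Matrix.sub_apply, Matrix.one_apply, hab]
    rw [hKab, hCba a b]
    ring
end

section
/- Fix a symmetric positive definite m×m real matrix R with unit diagonal. Then the conditional potential function ψ : ℝ^m → ℝ defined by ψ(u) := log det(L(u) + I) is strictly convex on ℝ^m. -/
set_option maxHeartbeats 1000000

/-- The kernel `L(u) = D(u) R D(u)` with `D(u) = diag(e^{u₁/2}, …, e^{u_m/2})`. -/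
noncomputable def Lmat {m : ℕ} (R : Matrix (Fin m) (Fin m) ℝ) (u : Fin m → ℝ) :
    Matrix (Fin m) (Fin m) ℝ :=
  Matrix.diagonal (fun i => Real.exp (u i / 2)) * R *
    Matrix.diagonal (fun i => Real.exp (u i / 2))

/-- The conditional potential function `ψ(u) = log det(L(u) + I)`. -/
noncomputable def psi {m : ℕ} (R : Matrix (Fin m) (Fin m) ℝ) (u : Fin m → ℝ) : ℝ :=
  Real.log (Lmat R u + 1).det

open Matrix Finset Real

variable {m : ℕ}

noncomputable def minor (R : Matrix (Fin m) (Fin m) ℝ) (s : Finset (Fin m)) : ℝ :=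
  (R.submatrix (fun i : {i // i ∈ s} => (i : Fin m)) (fun i : {i // i ∈ s} => (i : Fin m))).det

lemma sum_dite_zero (s : Finset (Fin m)) (x : {i // i ∈ s} → ℝ) (f : Fin m → ℝ) :
    (∑ i : Fin m, (if h : i ∈ s then x ⟨i, h⟩ else 0) * f i)
      = ∑ i : {i // i ∈ s}, x i * f i := by
  classical
  rw [← Finset.sum_subset (Finset.subset_univ s)
      (by intro i _ hi; simp [hi]),
    ← Finset.sum_coe_sort s]
  exact Finset.sum_congr rfl fun i _ => by rw [dif_pos i.2]

lemma posDef_submatrix {R : Matrix (Fin m) (Fin m) ℝ} (hR : R.PosDef) (s : Finset (Fin m)) :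
    (R.submatrix (fun i : {i // i ∈ s} => (i : Fin m))
        (fun i : {i // i ∈ s} => (i : Fin m))).PosDef := by
  classical
  refine Matrix.posDef_iff_dotProduct_mulVec.mpr ⟨hR.1.submatrix _, ?_⟩
  intro x hx
  set y : Fin m → ℝ := fun i => if h : i ∈ s then x ⟨i, h⟩ else 0 with hy
  have hy0 : y ≠ 0 := by
    intro h
    apply hx
    funext i
    have := congrFun h (i : Fin m)
    simpa [hy, i.2] using this
  have key : star x ⬝ᵥ ((R.submatrix (fun i : {i // i ∈ s} => (i : Fin m))
      (fun i : {i // i ∈ s} => (i : Fin m))) *ᵥ x) = star y ⬝ᵥ (R *ᵥ y) := by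
    simp only [hy, dotProduct, mulVec, submatrix_apply, star_trivial, Pi.star_apply]
    have inner : ∀ i : Fin m,
        (∑ j, R i j * (if h : j ∈ s then x ⟨j, h⟩ else 0))
          = ∑ j : {j // j ∈ s}, R i j * x j := by
      intro i
      calc (∑ j, R i j * (if h : j ∈ s then x ⟨j, h⟩ else 0))
          = ∑ j, (if h : j ∈ s then x ⟨j, h⟩ else 0) * R i j :=
            Finset.sum_congr rfl fun j _ => mul_comm _ _
        _ = ∑ j : {j // j ∈ s}, x j * R i (j : Fin m) := sum_dite_zero s x _
        _ = ∑ j : {j // j ∈ s}, R i (j : Fin m) * x j :=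
            Finset.sum_congr rfl fun j _ => mul_comm _ _
    calc (∑ i : {i // i ∈ s}, x i * ∑ j : {j // j ∈ s}, R i j * x j)
        = ∑ i : {i // i ∈ s}, x i *
            (∑ j, R (i : Fin m) j * (if h : j ∈ s then x ⟨j, h⟩ else 0)) := by
          exact Finset.sum_congr rfl fun i _ => by rw [inner]
      _ = ∑ i : Fin m, (if h : i ∈ s then x ⟨i, h⟩ else 0) *
            ∑ j, R i j * (if h : j ∈ s then x ⟨j, h⟩ else 0) :=
          (sum_dite_zero s x
            (fun i => ∑ j, R i j * (if h : j ∈ s then x ⟨j, h⟩ else 0))).symm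
  rw [key]
  exact hR.dotProduct_mulVec_pos hy0

lemma minor_pos {R : Matrix (Fin m) (Fin m) ℝ} (hR : R.PosDef) (s : Finset (Fin m)) :
    0 < minor R s :=
  (posDef_submatrix hR s).det_pos

lemma lmat_apply (R : Matrix (Fin m) (Fin m) ℝ) (u : Fin m → ℝ) (i j : Fin m) :
    Lmat R u i j = Real.exp (u i / 2) * R i j * Real.exp (u j / 2) := by
  simp [Lmat, Matrix.mul_diagonal, Matrix.diagonal_mul]

lemma det_piecewise (A : Matrix (Fin m) (Fin m) ℝ) (s : Finset (Fin m)) :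
    Matrix.det (Matrix.of (s.piecewise A (1 : Matrix (Fin m) (Fin m) ℝ)))
      = (A.submatrix (fun i : {i // i ∈ s} => (i : Fin m))
          (fun i : {i // i ∈ s} => (i : Fin m))).det := by
  classical
  have h0 : ∀ i, ¬ i ∈ s → ∀ j, j ∈ s →
      Matrix.of (s.piecewise A (1 : Matrix (Fin m) (Fin m) ℝ)) i j = 0 := by
    intro i hi j hj
    have hrow : s.piecewise A (1 : Matrix (Fin m) (Fin m) ℝ) i
        = (1 : Matrix (Fin m) (Fin m) ℝ) i :=
      s.piecewise_eq_of_notMem A (1 : Matrix (Fin m) (Fin m) ℝ) hi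
    show s.piecewise A (1 : Matrix (Fin m) (Fin m) ℝ) i j = 0
    rw [hrow]
    exact Matrix.one_apply_ne (by rintro rfl; exact hi hj)
  rw [Matrix.twoBlockTriangular_det
    (Matrix.of (s.piecewise A (1 : Matrix (Fin m) (Fin m) ℝ))) (fun i => i ∈ s) h0]
  have h1 : (Matrix.of (s.piecewise A (1 : Matrix (Fin m) (Fin m) ℝ))).toSquareBlockProp
        (fun i => i ∈ s)
      = A.submatrix (fun i : {i // i ∈ s} => (i : Fin m))
          (fun i : {i // i ∈ s} => (i : Fin m)) := by
    ext i j
    show s.piecewise A (1 : Matrix (Fin m) (Fin m) ℝ) (i : Fin m) (j : Fin m) = A i j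
    rw [s.piecewise_eq_of_mem A (1 : Matrix (Fin m) (Fin m) ℝ) i.2]
  have h2 : (Matrix.of (s.piecewise A (1 : Matrix (Fin m) (Fin m) ℝ))).toSquareBlockProp
      (fun i => ¬ i ∈ s) = 1 := by
    ext i j
    show s.piecewise A (1 : Matrix (Fin m) (Fin m) ℝ) (i : Fin m) (j : Fin m)
      = (1 : Matrix {a // ¬ a ∈ s} {a // ¬ a ∈ s} ℝ) i j
    rw [s.piecewise_eq_of_notMem A (1 : Matrix (Fin m) (Fin m) ℝ) i.2,
      Matrix.one_apply, Matrix.one_apply]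
    simp [Subtype.ext_iff]
  rw [h1, h2, Matrix.det_one, mul_one]
  congr!

lemma det_add_one (A : Matrix (Fin m) (Fin m) ℝ) :
    (A + 1).det = ∑ s : Finset (Fin m),
      (A.submatrix (fun i : {i // i ∈ s} => (i : Fin m))
        (fun i : {i // i ∈ s} => (i : Fin m))).det := by
  classical
  have h := (Matrix.detRowAlternating (n := Fin m) (R := ℝ)).toMultilinearMap.map_add_univ
    A (1 : Matrix (Fin m) (Fin m) ℝ)
  calc (A + 1).det = ∑ s : Finset (Fin m),
        Matrix.det (Matrix.of (s.piecewise A (1 : Matrix (Fin m) (Fin m) ℝ))) := h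
    _ = _ := Finset.sum_congr rfl fun s _ => det_piecewise A s

lemma det_L_submatrix (R : Matrix (Fin m) (Fin m) ℝ) (u : Fin m → ℝ) (s : Finset (Fin m)) :
    ((Lmat R u).submatrix (fun i : {i // i ∈ s} => (i : Fin m))
        (fun i : {i // i ∈ s} => (i : Fin m))).det
      = Real.exp (∑ i ∈ s, u i) * minor R s := by
  classical
  have hfac : (Lmat R u).submatrix (fun i : {i // i ∈ s} => (i : Fin m))
        (fun i : {i // i ∈ s} => (i : Fin m))
      = Matrix.diagonal (fun i : {i // i ∈ s} => Real.exp (u i / 2)) *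
          (R.submatrix (fun i : {i // i ∈ s} => (i : Fin m))
            (fun i : {i // i ∈ s} => (i : Fin m))) *
          Matrix.diagonal (fun i : {i // i ∈ s} => Real.exp (u i / 2)) := by
    ext i j
    simp [lmat_apply, Matrix.mul_diagonal, Matrix.diagonal_mul]
  rw [hfac, Matrix.det_mul, Matrix.det_mul, Matrix.det_diagonal, minor]
  have hprod : (∏ i : {i // i ∈ s}, Real.exp (u i / 2)) = Real.exp (∑ i ∈ s, u i / 2) := by
    rw [← Real.exp_sum]
    congr 1
    exact Finset.sum_coe_sort s (fun i => u i / 2)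
  rw [hprod]
  have h2 : Real.exp (∑ i ∈ s, u i / 2) * Real.exp (∑ i ∈ s, u i / 2)
      = Real.exp (∑ i ∈ s, u i) := by
    rw [← Real.exp_add, ← Finset.sum_add_distrib]
    congr 1
    exact Finset.sum_congr rfl fun i _ => by ring
  rw [mul_right_comm, h2]

lemma amgm_lt {a b r t : ℝ} (ha : 0 < a) (hb : 0 < b) (hab : a + b = 1)
    (hr : 0 < r) (ht : 0 < t) (hrt : r ≠ t) :
    r ^ a * t ^ b < a * r + b * t := by
  have hlog := strictConcaveOn_log_Ioi.2 (Set.mem_Ioi.2 hr) (Set.mem_Ioi.2 ht) hrt ha hb hab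
  have h1 : r ^ a * t ^ b = Real.exp (a * Real.log r + b * Real.log t) := by
    rw [Real.rpow_def_of_pos hr, Real.rpow_def_of_pos ht, ← Real.exp_add]
    ring_nf
  rw [h1]
  calc Real.exp (a * Real.log r + b * Real.log t)
      < Real.exp (Real.log (a * r + b * t)) := by
        apply Real.exp_lt_exp.2
        simpa [smul_eq_mul] using hlog
    _ = a * r + b * t := Real.exp_log (by positivity)

lemma amgm_le {a b r t : ℝ} (ha : 0 < a) (hb : 0 < b) (hab : a + b = 1)
    (hr : 0 < r) (ht : 0 < t) :
    r ^ a * t ^ b ≤ a * r + b * t := by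
  rcases eq_or_ne r t with rfl | h
  · have h1 : r ^ a * r ^ b = r := by
      rw [← Real.rpow_add hr, hab, Real.rpow_one]
    rw [h1]
    nlinarith
  · exact (amgm_lt ha hb hab hr ht h).le


theorem psi_strictConvexOn (m : ℕ)
    (R : Matrix (Fin m) (Fin m) ℝ) (hsymm : R.IsSymm) (hR : R.PosDef)
    (hdiag : ∀ i, R i i = 1) :
    StrictConvexOn ℝ Set.univ (psi R) := by
  classical
  have hc : ∀ s : Finset (Fin m), 0 < minor R s := minor_pos hR
  have hF : ∀ u : Fin m → ℝ, (Lmat R u + 1).det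
      = ∑ s : Finset (Fin m), minor R s * Real.exp (∑ i ∈ s, u i) := by
    intro u
    rw [det_add_one (Lmat R u)]
    exact Finset.sum_congr rfl fun s _ => by rw [det_L_submatrix, mul_comm]
  have hFpos : ∀ u : Fin m → ℝ,
      (0:ℝ) < ∑ s : Finset (Fin m), minor R s * Real.exp (∑ i ∈ s, u i) :=
    fun u => Finset.sum_pos (fun s _ => mul_pos (hc s) (Real.exp_pos _)) Finset.univ_nonempty
  have hψ : ∀ u : Fin m → ℝ,
      psi R u = Real.log (∑ s : Finset (Fin m), minor R s * Real.exp (∑ i ∈ s, u i)) :=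
    fun u => by rw [psi, hF]
  refine ⟨convex_univ, ?_⟩
  intro x _ y _ hxy a b ha hb hab
  set p : Finset (Fin m) → ℝ := fun s => minor R s * Real.exp (∑ i ∈ s, x i) with hp
  set q : Finset (Fin m) → ℝ := fun s => minor R s * Real.exp (∑ i ∈ s, y i) with hq
  have hppos : ∀ s, 0 < p s := fun s => mul_pos (hc s) (Real.exp_pos _)
  have hqpos : ∀ s, 0 < q s := fun s => mul_pos (hc s) (Real.exp_pos _)
  set P : ℝ := ∑ s : Finset (Fin m), p s with hP
  set Q : ℝ := ∑ s : Finset (Fin m), q s with hQ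
  have hPpos : 0 < P := Finset.sum_pos (fun s _ => hppos s) Finset.univ_nonempty
  have hQpos : 0 < Q := Finset.sum_pos (fun s _ => hqpos s) Finset.univ_nonempty
  have hPa : (0:ℝ) < P ^ a := Real.rpow_pos_of_pos hPpos a
  have hQb : (0:ℝ) < Q ^ b := Real.rpow_pos_of_pos hQpos b
  -- separation: some ratio differs
  have hsep : ∃ s₀ : Finset (Fin m), p s₀ / P ≠ q s₀ / Q := by
    by_contra hcon
    push_neg at hcon
    have hpq0 : p ∅ = q ∅ := by simp [hp, hq]
    have hPQ : P = Q := by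
      have h0 := hcon ∅
      rw [hpq0, div_eq_div_iff hPpos.ne' hQpos.ne'] at h0
      exact (mul_left_cancel₀ (hqpos ∅).ne' h0).symm
    apply hxy
    funext i
    have hi := hcon {i}
    rw [hPQ, div_left_inj' hQpos.ne'] at hi
    simp only [hp, hq, Finset.sum_singleton] at hi
    have := mul_left_cancel₀ (hc {i}).ne' hi
    exact Real.exp_eq_exp.1 this
  obtain ⟨s₀, hs₀⟩ := hsep
  -- pointwise AM-GM bounds
  have hterm : ∀ s, p s ^ a * q s ^ b
      ≤ (a * (p s / P) + b * (q s / Q)) * (P ^ a * Q ^ b) := by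
    intro s
    have h1 : p s ^ a * q s ^ b
        = ((p s / P) ^ a * (q s / Q) ^ b) * (P ^ a * Q ^ b) := by
      rw [Real.div_rpow (hppos s).le hPpos.le, Real.div_rpow (hqpos s).le hQpos.le]
      field_simp
    rw [h1]
    exact mul_le_mul_of_nonneg_right
      (amgm_le ha hb hab (div_pos (hppos s) hPpos) (div_pos (hqpos s) hQpos))
      (by positivity)
  have hterm_lt : p s₀ ^ a * q s₀ ^ b
      < (a * (p s₀ / P) + b * (q s₀ / Q)) * (P ^ a * Q ^ b) := by
    have h1 : p s₀ ^ a * q s₀ ^ b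
        = ((p s₀ / P) ^ a * (q s₀ / Q) ^ b) * (P ^ a * Q ^ b) := by
      rw [Real.div_rpow (hppos s₀).le hPpos.le, Real.div_rpow (hqpos s₀).le hQpos.le]
      field_simp
    rw [h1]
    exact mul_lt_mul_of_pos_right
      (amgm_lt ha hb hab (div_pos (hppos s₀) hPpos) (div_pos (hqpos s₀) hQpos) hs₀)
      (by positivity)
  -- sum of the RHS equals P^a * Q^b
  have hsum : ∑ s : Finset (Fin m), (a * (p s / P) + b * (q s / Q)) * (P ^ a * Q ^ b)
      = P ^ a * Q ^ b := by
    rw [← Finset.sum_mul]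
    have e0 : ∑ s : Finset (Fin m), (a * (p s / P) + b * (q s / Q)) = 1 := by
      rw [Finset.sum_add_distrib, ← Finset.mul_sum, ← Finset.mul_sum,
        ← Finset.sum_div, ← Finset.sum_div, ← hP, ← hQ,
        div_self hPpos.ne', div_self hQpos.ne', mul_one, mul_one, hab]
    rw [e0, one_mul]
  -- mixing identity
  have hmix : ∀ s : Finset (Fin m),
      minor R s * Real.exp (∑ i ∈ s, (a • x + b • y) i) = p s ^ a * q s ^ b := by
    intro s
    have hsum' : (∑ i ∈ s, (a • x + b • y) i)
        = a * (∑ i ∈ s, x i) + b * (∑ i ∈ s, y i) := by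
      simp [Finset.sum_add_distrib, Finset.mul_sum]
    have hc1 : minor R s = minor R s ^ a * minor R s ^ b := by
      rw [← Real.rpow_add (hc s), hab, Real.rpow_one]
    have he : Real.exp (a * (∑ i ∈ s, x i) + b * (∑ i ∈ s, y i))
        = Real.exp (∑ i ∈ s, x i) ^ a * Real.exp (∑ i ∈ s, y i) ^ b := by
      rw [Real.exp_add, mul_comm a _, mul_comm b _, Real.exp_mul, Real.exp_mul]
    rw [hsum', hp, hq]
    simp only
    rw [Real.mul_rpow (hc s).le (Real.exp_pos _).le,
      Real.mul_rpow (hc s).le (Real.exp_pos _).le, he]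
    conv_lhs => rw [hc1]
    ring
  have hlt : ∑ s : Finset (Fin m), p s ^ a * q s ^ b < P ^ a * Q ^ b :=
    calc ∑ s : Finset (Fin m), p s ^ a * q s ^ b
        < ∑ s : Finset (Fin m), (a * (p s / P) + b * (q s / Q)) * (P ^ a * Q ^ b) :=
          Finset.sum_lt_sum (fun s _ => hterm s) ⟨s₀, Finset.mem_univ _, hterm_lt⟩
      _ = P ^ a * Q ^ b := hsum
  have hsum_pos : (0:ℝ) < ∑ s : Finset (Fin m), p s ^ a * q s ^ b :=
    Finset.sum_pos (fun s _ => mul_pos (Real.rpow_pos_of_pos (hppos s) a)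
      (Real.rpow_pos_of_pos (hqpos s) b)) Finset.univ_nonempty
  calc psi R (a • x + b • y)
      = Real.log (∑ s : Finset (Fin m), p s ^ a * q s ^ b) := by
        rw [hψ]
        congr 1
        exact Finset.sum_congr rfl fun s _ => hmix s
    _ < Real.log (P ^ a * Q ^ b) := Real.log_lt_log hsum_pos hlt
    _ = a * Real.log P + b * Real.log Q := by
        rw [Real.log_mul hPa.ne' hQb.ne', Real.log_rpow hPpos, Real.log_rpow hQpos]
    _ = a • psi R x + b • psi R y := by
        rw [hψ x, hψ y, smul_eq_mul, smul_eq_mul, hP, hQ]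
end
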